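/- arXiv:2104.09042 — 4 statements merged into one kernel-verified Lean document; each statement's English description precedes it below -/
import Mathlib

section
/- Let γ, N, α, β be positive real constants and let a₁, a₂, a₃ be real constants. The function e_c(u, uₓ, u_y, p, pₓ, p_y) = S(u,p) + a₁²(uₓ² + u_y²)/(36u) + a₂²(pₓ² + p_y²)/(36p) + a₃²((uₓ+pₓ)² + (u_y+p_y)²)/(36(1−u−p)) is convex on the set {(u, uₓ, u_y, p, pₓ, p_y) ∈ ℝ⁶ : u > 0, p > 0, u + p < 1}. -/
lemma ec_combo_pos {s t a b : ℝ} (hs : 0 < s) (ht : 0 < t) (ha : 0 ≤ a) (hb : 0 ≤ b)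
    (hab : a + b = 1) : 0 < a * s + b * t := by
  rcases eq_or_lt_of_le ha with h | h
  · have hb1 : b = 1 := by linarith
    subst hb1; nlinarith
  · nlinarith [mul_pos h hs, mul_nonneg hb ht.le]

lemma ec_combo_lt_one {s t a b : ℝ} (hs : s < 1) (ht : t < 1) (ha : 0 ≤ a) (hb : 0 ≤ b)
    (hab : a + b = 1) : a * s + b * t < 1 := by
  rcases eq_or_lt_of_le ha with h | h
  · have hb1 : b = 1 := by linarith
    subst hb1; nlinarith
  · nlinarith [mul_lt_mul_of_pos_left hs h, mul_le_mul_of_nonneg_left ht.le hb]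

lemma ec_mul_log_combo {s t a b : ℝ} (hs : 0 ≤ s) (ht : 0 ≤ t) (ha : 0 ≤ a) (hb : 0 ≤ b)
    (hab : a + b = 1) :
    (a * s + b * t) * Real.log (a * s + b * t)
      ≤ a * (s * Real.log s) + b * (t * Real.log t) := by
  have := Real.convexOn_mul_log.2 (Set.mem_Ici.mpr hs) (Set.mem_Ici.mpr ht) ha hb hab
  simpa [smul_eq_mul] using this

lemma ec_log_term {c d s t a b : ℝ} (hc : 0 < c) (hd : 0 < d) (hs : 0 < s) (ht : 0 < t)
    (ha : 0 ≤ a) (hb : 0 ≤ b) (hab : a + b = 1) :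
    (a * s + b * t) / d * Real.log (c * (a * s + b * t) / d)
      ≤ a * (s / d * Real.log (c * s / d)) + b * (t / d * Real.log (c * t / d)) := by
  have hA : 0 < a * s + b * t := ec_combo_pos hs ht ha hb hab
  have hM := ec_mul_log_combo hs.le ht.le ha hb hab
  have hM' := mul_le_mul_of_nonneg_left hM (by positivity : (0:ℝ) ≤ 1 / d)
  rw [Real.log_div (by positivity) hd.ne', Real.log_mul hc.ne' hA.ne',
      Real.log_div (by positivity) hd.ne', Real.log_mul hc.ne' hs.ne',
      Real.log_div (by positivity) hd.ne', Real.log_mul hc.ne' ht.ne']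
  have key : (a * s + b * t) / d * (Real.log c + Real.log (a * s + b * t) - Real.log d)
      - (a * (s / d * (Real.log c + Real.log s - Real.log d))
        + b * (t / d * (Real.log c + Real.log t - Real.log d)))
      = 1 / d * ((a * s + b * t) * Real.log (a * s + b * t))
        - 1 / d * (a * (s * Real.log s) + b * (t * Real.log t)) := by ring
  linarith [key, hM']

lemma ec_quad {u v w z a b : ℝ} (hu : 0 < u) (hv : 0 < v) (ha : 0 ≤ a) (hb : 0 ≤ b)
    (hab : a + b = 1) :
    (a * w + b * z) ^ 2 / (a * u + b * v) ≤ a * (w ^ 2 / u) + b * (z ^ 2 / v) := by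
  have hc : 0 < a * u + b * v := ec_combo_pos hu hv ha hb hab
  have hb1 : b = 1 - a := by linarith
  subst hb1
  have hrhs : a * (w ^ 2 / u) + (1 - a) * (z ^ 2 / v)
      = (a * w ^ 2 * v + (1 - a) * z ^ 2 * u) / (u * v) := by
    field_simp
  rw [hrhs, div_le_div_iff₀ hc (by positivity)]
  nlinarith [mul_nonneg (mul_nonneg ha (by linarith : (0:ℝ) ≤ 1 - a)) (sq_nonneg (w * v - z * u))]

lemma ec_quadsum {k u v w1 z1 w2 z2 a b : ℝ} (hk : 0 ≤ k) (hu : 0 < u) (hv : 0 < v)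
    (ha : 0 ≤ a) (hb : 0 ≤ b) (hab : a + b = 1) :
    k * ((a * w1 + b * z1) ^ 2 + (a * w2 + b * z2) ^ 2) / (36 * (a * u + b * v))
      ≤ a * (k * (w1 ^ 2 + w2 ^ 2) / (36 * u)) + b * (k * (z1 ^ 2 + z2 ^ 2) / (36 * v)) := by
  have e : a * (36 * u) + b * (36 * v) = 36 * (a * u + b * v) := by ring
  have h1 := ec_quad (w := w1) (z := z1) (by positivity : (0:ℝ) < 36 * u)
    (by positivity : (0:ℝ) < 36 * v) ha hb hab
  have h2 := ec_quad (w := w2) (z := z2) (by positivity : (0:ℝ) < 36 * u)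
    (by positivity : (0:ℝ) < 36 * v) ha hb hab
  rw [e] at h1 h2
  have hsum := mul_le_mul_of_nonneg_left (add_le_add h1 h2) hk
  calc k * ((a * w1 + b * z1) ^ 2 + (a * w2 + b * z2) ^ 2) / (36 * (a * u + b * v))
      = k * ((a * w1 + b * z1) ^ 2 / (36 * (a * u + b * v))
          + (a * w2 + b * z2) ^ 2 / (36 * (a * u + b * v))) := by ring
    _ ≤ k * ((a * (w1 ^ 2 / (36 * u)) + b * (z1 ^ 2 / (36 * v)))
          + (a * (w2 ^ 2 / (36 * u)) + b * (z2 ^ 2 / (36 * v)))) := hsum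
    _ = a * (k * (w1 ^ 2 + w2 ^ 2) / (36 * u)) + b * (k * (z1 ^ 2 + z2 ^ 2) / (36 * v)) := by
        ring

/-- The convex part of the Flory–Huggins–deGennes energy density,
`e_c(u,uₓ,u_y,p,pₓ,p_y) = S(u,p) + a₁²(uₓ²+u_y²)/(36u) + a₂²(pₓ²+p_y²)/(36p)
  + a₃²((uₓ+pₓ)²+(u_y+p_y)²)/(36(1−u−p))`,
is convex on `{(u,uₓ,u_y,p,pₓ,p_y) ∈ ℝ⁶ : u > 0, p > 0, u + p < 1}`.
Here the coordinates are `x 0 = u, x 1 = uₓ, x 2 = u_y, x 3 = p, x 4 = pₓ, x 5 = p_y`. -/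
theorem ec_convex (γ N α β : ℝ) (hγ : 0 < γ) (hN : 0 < N) (hα : 0 < α) (hβ : 0 < β)
    (a₁ a₂ a₃ : ℝ) :
    ConvexOn ℝ {x : Fin 6 → ℝ | 0 < x 0 ∧ 0 < x 3 ∧ x 0 + x 3 < 1}
      (fun x : Fin 6 → ℝ =>
        (x 0 / γ * Real.log (α * x 0 / γ) + x 3 / N * Real.log (β * x 3 / N)
            + (1 - x 0 - x 3) * Real.log (1 - x 0 - x 3))
          + a₁ ^ 2 * ((x 1) ^ 2 + (x 2) ^ 2) / (36 * x 0)
          + a₂ ^ 2 * ((x 4) ^ 2 + (x 5) ^ 2) / (36 * x 3)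
          + a₃ ^ 2 * ((x 1 + x 4) ^ 2 + (x 2 + x 5) ^ 2) / (36 * (1 - x 0 - x 3))) := by
  have hS : Convex ℝ {x : Fin 6 → ℝ | 0 < x 0 ∧ 0 < x 3 ∧ x 0 + x 3 < 1} := by
    intro x hx y hy a b ha hb hab
    simp only [Set.mem_setOf_eq, Pi.add_apply, Pi.smul_apply, smul_eq_mul] at *
    refine ⟨ec_combo_pos hx.1 hy.1 ha hb hab, ec_combo_pos hx.2.1 hy.2.1 ha hb hab, ?_⟩
    have := ec_combo_lt_one hx.2.2 hy.2.2 ha hb hab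
    nlinarith [this]
  have cv1 : ConvexOn ℝ {x : Fin 6 → ℝ | 0 < x 0 ∧ 0 < x 3 ∧ x 0 + x 3 < 1}
      (fun x : Fin 6 → ℝ => x 0 / γ * Real.log (α * x 0 / γ)) := by
    refine ⟨hS, fun x hx y hy a b ha hb hab => ?_⟩
    simp only [Pi.add_apply, Pi.smul_apply, smul_eq_mul]
    exact ec_log_term hα hγ hx.1 hy.1 ha hb hab
  have cv2 : ConvexOn ℝ {x : Fin 6 → ℝ | 0 < x 0 ∧ 0 < x 3 ∧ x 0 + x 3 < 1}
      (fun x : Fin 6 → ℝ => x 3 / N * Real.log (β * x 3 / N)) := by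
    refine ⟨hS, fun x hx y hy a b ha hb hab => ?_⟩
    simp only [Pi.add_apply, Pi.smul_apply, smul_eq_mul]
    exact ec_log_term hβ hN hx.2.1 hy.2.1 ha hb hab
  have cv3 : ConvexOn ℝ {x : Fin 6 → ℝ | 0 < x 0 ∧ 0 < x 3 ∧ x 0 + x 3 < 1}
      (fun x : Fin 6 → ℝ => (1 - x 0 - x 3) * Real.log (1 - x 0 - x 3)) := by
    refine ⟨hS, fun x hx y hy a b ha hb hab => ?_⟩
    simp only [Pi.add_apply, Pi.smul_apply, smul_eq_mul]
    have e : 1 - (a * x 0 + b * y 0) - (a * x 3 + b * y 3)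
        = a * (1 - x 0 - x 3) + b * (1 - y 0 - y 3) := by
      have := hab; ring_nf; linarith
    rw [e]
    exact ec_mul_log_combo (by linarith [hx.2.2]) (by linarith [hy.2.2]) ha hb hab
  have cv4 : ConvexOn ℝ {x : Fin 6 → ℝ | 0 < x 0 ∧ 0 < x 3 ∧ x 0 + x 3 < 1}
      (fun x : Fin 6 → ℝ => a₁ ^ 2 * ((x 1) ^ 2 + (x 2) ^ 2) / (36 * x 0)) := by
    refine ⟨hS, fun x hx y hy a b ha hb hab => ?_⟩
    simp only [Pi.add_apply, Pi.smul_apply, smul_eq_mul]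
    exact ec_quadsum (by positivity) hx.1 hy.1 ha hb hab
  have cv5 : ConvexOn ℝ {x : Fin 6 → ℝ | 0 < x 0 ∧ 0 < x 3 ∧ x 0 + x 3 < 1}
      (fun x : Fin 6 → ℝ => a₂ ^ 2 * ((x 4) ^ 2 + (x 5) ^ 2) / (36 * x 3)) := by
    refine ⟨hS, fun x hx y hy a b ha hb hab => ?_⟩
    simp only [Pi.add_apply, Pi.smul_apply, smul_eq_mul]
    exact ec_quadsum (by positivity) hx.2.1 hy.2.1 ha hb hab
  have cv6 : ConvexOn ℝ {x : Fin 6 → ℝ | 0 < x 0 ∧ 0 < x 3 ∧ x 0 + x 3 < 1}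
      (fun x : Fin 6 → ℝ =>
        a₃ ^ 2 * ((x 1 + x 4) ^ 2 + (x 2 + x 5) ^ 2) / (36 * (1 - x 0 - x 3))) := by
    refine ⟨hS, fun x hx y hy a b ha hb hab => ?_⟩
    simp only [Pi.add_apply, Pi.smul_apply, smul_eq_mul]
    have e1 : a * x 1 + b * y 1 + (a * x 4 + b * y 4)
        = a * (x 1 + x 4) + b * (y 1 + y 4) := by ring
    have e2 : a * x 2 + b * y 2 + (a * x 5 + b * y 5)
        = a * (x 2 + x 5) + b * (y 2 + y 5) := by ring
    have e3 : 1 - (a * x 0 + b * y 0) - (a * x 3 + b * y 3)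
        = a * (1 - x 0 - x 3) + b * (1 - y 0 - y 3) := by
      have := hab; ring_nf; linarith
    rw [e1, e2, e3]
    exact ec_quadsum (by positivity) (by linarith [hx.2.2]) (by linarith [hy.2.2]) ha hb hab
  exact ((((cv1.add cv2).add cv3).add cv4).add cv5).add cv6
end

section
/- Let X be a real inner product space and K ⊆ X a convex set. Let E_c, E_e : X → ℝ be convex on K, having gradients ∇E_c(z), ∇E_e(z) at every z ∈ K, and set E = E_c − E_e. Suppose x, x⁺ ∈ K satisfy ⟨∇E_c(x⁺) − ∇E_e(x), x⁺ − x⟩ ≤ 0. Then E(x⁺) ≤ E(x). In particular, any one-step convex-splitting scheme, which makes this inner product equal to minus a nonnegative dissipation term, is unconditionally energy stable. -/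
open scoped RealInnerProductSpace

lemma convexOn_fderiv_le {X : Type*} [NormedAddCommGroup X] [NormedSpace ℝ X]
    {K : Set X} {f : X → ℝ} {f' : X →L[ℝ] ℝ} {a b : X}
    (hf : ConvexOn ℝ K f) (hfd : HasFDerivAt f f' a) (ha : a ∈ K) (hb : b ∈ K) :
    f' (b - a) ≤ f b - f a := by
  set g : ℝ → X := fun t => a + t • (b - a) with hg
  have hg0 : g 0 = a := by simp [hg]
  have hgd : HasDerivAt g (b - a) 0 := by
    rw [hg]; simpa using ((hasDerivAt_id (0:ℝ)).smul_const (b - a)).const_add a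
  have hcomp : HasDerivAt (f ∘ g) (f' (b - a)) 0 := by
    have := (hg0 ▸ hfd : HasFDerivAt f f' (g 0)).comp_hasDerivAt 0 hgd
    simpa using this
  have htend : Filter.Tendsto (slope (f ∘ g) 0) (nhdsWithin 0 (Set.Ioi 0))
      (nhds (f' (b - a))) :=
    (hasDerivAt_iff_tendsto_slope.mp hcomp).mono_left
      (nhdsWithin_mono _ (fun t ht => ne_of_gt ht))
  refine le_of_tendsto htend ?_
  filter_upwards [Ioo_mem_nhdsGT_of_mem (by norm_num : (0:ℝ) ∈ Set.Ico 0 1)] with t ht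
  have ht0 : 0 < t := ht.1
  have ht1 : t ≤ 1 := ht.2.le
  have hmem : g t = (1 - t) • a + t • b := by
    rw [hg]; simp [smul_sub, sub_smul]; abel
  have hconv : f (g t) ≤ (1 - t) * f a + t * f b := by
    rw [hmem]
    exact hf.2 ha hb (by linarith) ht0.le (by ring)
  have : slope (f ∘ g) 0 t = (f (g t) - f a) / t := by
    simp [slope, hg0, Function.comp, div_eq_inv_mul]
  rw [this, div_le_iff₀ ht0]
  nlinarith [hconv]

/-- Abstract unconditional energy stability of a convex-splitting step: if `E_c` and `E_e`
are convex on a convex set `K` of a real inner product space, with gradients at every point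
of `K`, `E = E_c − E_e`, and the one-step update `x⁺` from `x` satisfies
`⟨∇E_c(x⁺) − ∇E_e(x), x⁺ − x⟩ ≤ 0`, then `E(x⁺) ≤ E(x)`. -/
theorem convex_splitting_energy_stable
    {X : Type*} [NormedAddCommGroup X] [InnerProductSpace ℝ X]
    (K : Set X) (hK : Convex ℝ K)
    (Ec Ee : X → ℝ) (gradEc gradEe : X → X)
    (hEc : ConvexOn ℝ K Ec) (hEe : ConvexOn ℝ K Ee)
    (hgc : ∀ z ∈ K, HasFDerivAt Ec (innerSL ℝ (gradEc z)) z)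
    (hge : ∀ z ∈ K, HasFDerivAt Ee (innerSL ℝ (gradEe z)) z)
    (x xp : X) (hx : x ∈ K) (hxp : xp ∈ K)
    (hstep : ⟪gradEc xp - gradEe x, xp - x⟫ ≤ 0) :
    Ec xp - Ee xp ≤ Ec x - Ee x := by
  have h1 : (innerSL ℝ (gradEc xp)) (x - xp) ≤ Ec x - Ec xp :=
    convexOn_fderiv_le hEc (hgc xp hxp) hxp hx
  have h2 : (innerSL ℝ (gradEe x)) (xp - x) ≤ Ee xp - Ee x :=
    convexOn_fderiv_le hEe (hge x hx) hx hxp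
  simp only [innerSL_apply_apply] at h1 h2
  rw [inner_sub_left] at hstep
  have : ⟪gradEc xp, x - xp⟫ = - ⟪gradEc xp, xp - x⟫ := by
    rw [← inner_neg_right]; congr 1; abel
  linarith [this ▸ h1]
end

section
/- Let P₁, P₂, P₃ ∈ ℝ² be affinely independent points forming a triangle e, let Δ_e > 0 be the area of e (so 2Δ_e = |det(P₂−P₁, P₃−P₁)|), and let h_e be the maximum of the pairwise distances |P₁−P₂|, |P₂−P₃|, |P₃−P₁| (the diameter of e). Let φ : ℝ² → ℝ be an affine function, φ(x) = ⟨g, x⟩ + c with g ∈ ℝ², c ∈ ℝ, such that φ(P₁), φ(P₂), φ(P₃) ≥ 0. Then ‖g‖ ≤ (√2·h_e/(2Δ_e))·(φ(P₁) + φ(P₂) + φ(P₃)). Consequently, if moreover A(φ) := (φ(P₁)+φ(P₂)+φ(P₃))/3 > 0, then ‖g‖/A(φ) ≤ 3√2·h_e/(2Δ_e). -/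
open scoped RealInnerProductSpace


lemma scalar_helper (u0 u1 v0 v1 a b g0 g1 Δ h S : ℝ)
    (hΔ : 0 < Δ) (hh : 0 ≤ h)
    (hdet : 2*Δ = |u0*v1 - u1*v0|)
    (hu : u0^2 + u1^2 ≤ h^2) (hv : v0^2 + v1^2 ≤ h^2)
    (ha : a = g0*u0 + g1*u1) (hb : b = g0*v0 + g1*v1)
    (hab : a^2 + b^2 ≤ S^2) (hS : 0 ≤ S) :
    Real.sqrt (g0^2 + g1^2) ≤ Real.sqrt 2 * h / (2*Δ) * S := by
  set D := u0*v1 - u1*v0 with hD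
  have hD2 : (2*Δ)^2 = D^2 := by rw [hdet, sq_abs]
  have e1 : g0 * D = a*v1 - b*u1 := by rw [ha, hb, hD]; ring
  have e2 : g1 * D = b*u0 - a*v0 := by rw [ha, hb, hD]; ring
  have eq1 : (g0^2 + g1^2) * D^2 = (g0*D)^2 + (g1*D)^2 := by ring
  rw [e1, e2] at eq1
  have step1 : (g0^2 + g1^2) * D^2 ≤ (a^2 + b^2) * ((u0^2+u1^2) + (v0^2+v1^2)) := by
    nlinarith [sq_nonneg (a*u1 + b*v1), sq_nonneg (a*u0 + b*v0)]
  have step2 : (a^2 + b^2) * ((u0^2+u1^2) + (v0^2+v1^2)) ≤ S^2 * (2*h^2) :=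
    mul_le_mul hab (by linarith) (by positivity) (sq_nonneg S)
  have key : (g0^2 + g1^2) * (2*Δ)^2 ≤ 2 * h^2 * S^2 := by
    rw [hD2]; linarith
  have hR : 0 ≤ Real.sqrt 2 * h / (2*Δ) * S := by positivity
  have h2 : Real.sqrt 2 ^ 2 = 2 := Real.sq_sqrt (by norm_num)
  calc Real.sqrt (g0^2 + g1^2) ≤ Real.sqrt ((Real.sqrt 2 * h / (2*Δ) * S)^2) := by
        apply Real.sqrt_le_sqrt
        have hΔ' : (0:ℝ) < (2*Δ)^2 := by positivity
        rw [div_mul_eq_mul_div, div_pow, mul_pow, mul_pow, h2, le_div_iff₀ hΔ']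
        linarith
    _ = Real.sqrt 2 * h / (2*Δ) * S := Real.sqrt_sq hR

open scoped RealInnerProductSpace

lemma vec_helper (Q₁ Q₂ Q₃ : EuclideanSpace ℝ (Fin 2)) (Δ h : ℝ)
    (hΔ : 0 < Δ) (hh : 0 ≤ h)
    (harea : 2 * Δ = |(Q₂ 0 - Q₁ 0) * (Q₃ 1 - Q₁ 1) - (Q₂ 1 - Q₁ 1) * (Q₃ 0 - Q₁ 0)|)
    (hd2 : dist Q₁ Q₂ ≤ h) (hd3 : dist Q₁ Q₃ ≤ h)
    (g : EuclideanSpace ℝ (Fin 2)) (c : ℝ) (f1 f2 f3 : ℝ)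
    (hf1 : f1 = ⟪g, Q₁⟫ + c) (hf2 : f2 = ⟪g, Q₂⟫ + c) (hf3 : f3 = ⟪g, Q₃⟫ + c)
    (h1 : 0 ≤ f1) (h2 : 0 ≤ f2) (h3 : 0 ≤ f3) (hm2 : f1 ≤ f2) (hm3 : f1 ≤ f3) :
    ‖g‖ ≤ Real.sqrt 2 * h / (2*Δ) * (f1 + f2 + f3) := by
  have hnorm : ‖g‖ = Real.sqrt (g 0 ^ 2 + g 1 ^ 2) := by
    simp [EuclideanSpace.norm_eq, Fin.sum_univ_two, sq_abs]
  have hdist : ∀ x y : EuclideanSpace ℝ (Fin 2),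
      dist x y = Real.sqrt ((x 0 - y 0)^2 + (x 1 - y 1)^2) := by
    intro x y
    simp [EuclideanSpace.dist_eq, Fin.sum_univ_two, Real.dist_eq, sq_abs]
  have hinner : ∀ x : EuclideanSpace ℝ (Fin 2), ⟪g, x⟫ = g 0 * x 0 + g 1 * x 1 := by
    intro x; simp [PiLp.inner_apply, Fin.sum_univ_two, RCLike.inner_apply]; ring
  have hu : (Q₂ 0 - Q₁ 0)^2 + (Q₂ 1 - Q₁ 1)^2 ≤ h^2 := by
    have := hd2; rw [hdist] at this
    calc (Q₂ 0 - Q₁ 0)^2 + (Q₂ 1 - Q₁ 1)^2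
        = Real.sqrt ((Q₁ 0 - Q₂ 0)^2 + (Q₁ 1 - Q₂ 1)^2) ^ 2 := by
          rw [Real.sq_sqrt (by positivity)]; ring
      _ ≤ h^2 := by apply pow_le_pow_left₀ (Real.sqrt_nonneg _) this
  have hv : (Q₃ 0 - Q₁ 0)^2 + (Q₃ 1 - Q₁ 1)^2 ≤ h^2 := by
    have := hd3; rw [hdist] at this
    calc (Q₃ 0 - Q₁ 0)^2 + (Q₃ 1 - Q₁ 1)^2
        = Real.sqrt ((Q₁ 0 - Q₃ 0)^2 + (Q₁ 1 - Q₃ 1)^2) ^ 2 := by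
          rw [Real.sq_sqrt (by positivity)]; ring
      _ ≤ h^2 := by apply pow_le_pow_left₀ (Real.sqrt_nonneg _) this
  have ha : f2 - f1 = g 0 * (Q₂ 0 - Q₁ 0) + g 1 * (Q₂ 1 - Q₁ 1) := by
    rw [hf1, hf2, hinner, hinner]; ring
  have hb : f3 - f1 = g 0 * (Q₃ 0 - Q₁ 0) + g 1 * (Q₃ 1 - Q₁ 1) := by
    rw [hf1, hf3, hinner, hinner]; ring
  have hab : (f2 - f1)^2 + (f3 - f1)^2 ≤ (f1 + f2 + f3)^2 := by nlinarith
  rw [hnorm]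
  exact scalar_helper _ _ _ _ _ _ _ _ _ _ _ hΔ hh harea hu hv ha hb hab (by linarith)

/-- Gradient bound for a nonnegative affine function on a triangle: if `P₁, P₂, P₃ ∈ ℝ²`
are affinely independent, `Δₑ > 0` is the area of the triangle (`2Δₑ = |det(P₂−P₁, P₃−P₁)|`),
`hₑ` is the diameter (maximum pairwise distance of the vertices), and `φ(x) = ⟨g, x⟩ + c`
is affine with `φ(Pᵢ) ≥ 0`, then `‖g‖ ≤ (√2·hₑ/(2Δₑ))·(φ(P₁)+φ(P₂)+φ(P₃))`;
consequently, if the average `A(φ) = (φ(P₁)+φ(P₂)+φ(P₃))/3` is positive, then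
`‖g‖/A(φ) ≤ 3√2·hₑ/(2Δₑ)`. -/
theorem affine_gradient_bound_on_triangle
    (P₁ P₂ P₃ : EuclideanSpace ℝ (Fin 2))
    (hind : AffineIndependent ℝ ![P₁, P₂, P₃])
    (Δₑ : ℝ) (hΔpos : 0 < Δₑ)
    (harea : 2 * Δₑ =
      |(P₂ - P₁) 0 * (P₃ - P₁) 1 - (P₂ - P₁) 1 * (P₃ - P₁) 0|)
    (hₑ : ℝ) (hdiam : hₑ = max (max (dist P₁ P₂) (dist P₂ P₃)) (dist P₃ P₁))
    (g : EuclideanSpace ℝ (Fin 2)) (c : ℝ)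
    (φ : EuclideanSpace ℝ (Fin 2) → ℝ) (hφ : ∀ x, φ x = ⟪g, x⟫ + c)
    (h1 : 0 ≤ φ P₁) (h2 : 0 ≤ φ P₂) (h3 : 0 ≤ φ P₃) :
    ‖g‖ ≤ Real.sqrt 2 * hₑ / (2 * Δₑ) * (φ P₁ + φ P₂ + φ P₃) ∧
      (0 < (φ P₁ + φ P₂ + φ P₃) / 3 →
        ‖g‖ / ((φ P₁ + φ P₂ + φ P₃) / 3) ≤ 3 * Real.sqrt 2 * hₑ / (2 * Δₑ)) := by
  have harea' : 2 * Δₑ =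
      |(P₂ 0 - P₁ 0) * (P₃ 1 - P₁ 1) - (P₂ 1 - P₁ 1) * (P₃ 0 - P₁ 0)| := by
    simpa using harea
  have hh : 0 ≤ hₑ := by
    rw [hdiam]; exact le_trans dist_nonneg (le_max_of_le_left (le_max_left _ _))
  have hd12 : dist P₁ P₂ ≤ hₑ := by rw [hdiam]; exact le_max_of_le_left (le_max_left _ _)
  have hd23 : dist P₂ P₃ ≤ hₑ := by rw [hdiam]; exact le_max_of_le_left (le_max_right _ _)
  have hd31 : dist P₃ P₁ ≤ hₑ := by rw [hdiam]; exact le_max_right _ _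
  have main : ‖g‖ ≤ Real.sqrt 2 * hₑ / (2 * Δₑ) * (φ P₁ + φ P₂ + φ P₃) := by
    rcases le_total (φ P₁) (φ P₂) with h12 | h12
    · rcases le_total (φ P₁) (φ P₃) with h13 | h13
      · -- P₁ is min
        exact vec_helper P₁ P₂ P₃ Δₑ hₑ hΔpos hh harea' hd12 (by rw [dist_comm]; exact hd31)
          g c _ _ _ (hφ P₁) (hφ P₂) (hφ P₃) h1 h2 h3 h12 h13
      · -- P₃ is min (φP₃ ≤ φP₁ ≤ φP₂)
        have harea'' : 2 * Δₑ =
            |(P₁ 0 - P₃ 0) * (P₂ 1 - P₃ 1) - (P₁ 1 - P₃ 1) * (P₂ 0 - P₃ 0)| := by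
          rw [harea']; congr 1; ring
        have := vec_helper P₃ P₁ P₂ Δₑ hₑ hΔpos hh harea'' hd31 (by rw [dist_comm]; exact hd23)
          g c _ _ _ (hφ P₃) (hφ P₁) (hφ P₂) h3 h1 h2 h13 (le_trans h13 h12)
        calc ‖g‖ ≤ Real.sqrt 2 * hₑ / (2 * Δₑ) * (φ P₃ + φ P₁ + φ P₂) := this
          _ = Real.sqrt 2 * hₑ / (2 * Δₑ) * (φ P₁ + φ P₂ + φ P₃) := by ring
    · rcases le_total (φ P₂) (φ P₃) with h23 | h23
      · -- P₂ is min
        have harea'' : 2 * Δₑ =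
            |(P₁ 0 - P₂ 0) * (P₃ 1 - P₂ 1) - (P₁ 1 - P₂ 1) * (P₃ 0 - P₂ 0)| := by
          rw [harea', ← abs_neg]; congr 1; ring
        have := vec_helper P₂ P₁ P₃ Δₑ hₑ hΔpos hh harea'' (by rw [dist_comm]; exact hd12) hd23
          g c _ _ _ (hφ P₂) (hφ P₁) (hφ P₃) h2 h1 h3 h12 h23
        calc ‖g‖ ≤ Real.sqrt 2 * hₑ / (2 * Δₑ) * (φ P₂ + φ P₁ + φ P₃) := this
          _ = Real.sqrt 2 * hₑ / (2 * Δₑ) * (φ P₁ + φ P₂ + φ P₃) := by ring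
      · -- P₃ is min
        have harea'' : 2 * Δₑ =
            |(P₁ 0 - P₃ 0) * (P₂ 1 - P₃ 1) - (P₁ 1 - P₃ 1) * (P₂ 0 - P₃ 0)| := by
          rw [harea']; congr 1; ring
        have := vec_helper P₃ P₁ P₂ Δₑ hₑ hΔpos hh harea'' hd31 (by rw [dist_comm]; exact hd23)
          g c _ _ _ (hφ P₃) (hφ P₁) (hφ P₂) h3 h1 h2 (le_trans h23 h12) h23
        calc ‖g‖ ≤ Real.sqrt 2 * hₑ / (2 * Δₑ) * (φ P₃ + φ P₁ + φ P₂) := this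
          _ = Real.sqrt 2 * hₑ / (2 * Δₑ) * (φ P₁ + φ P₂ + φ P₃) := by ring
  refine ⟨main, fun hSpos => ?_⟩
  rw [div_le_iff₀ hSpos]
  have : 3 * Real.sqrt 2 * hₑ / (2 * Δₑ) * ((φ P₁ + φ P₂ + φ P₃) / 3)
      = Real.sqrt 2 * hₑ / (2 * Δₑ) * (φ P₁ + φ P₂ + φ P₃) := by ring
  rw [this]; exact main
end

section
/- Let γ, N, α, β > 0, let χ₁₂, χ₁₃, χ₂₃ be real constants with χ₁₃ > 0, χ₂₃ > 0, and 4χ₁₃χ₂₃ − (χ₁₂ − χ₁₃ − χ₂₃)² > 0, and let a₁, a₂, a₃ be real constants. Define the energy density f(u, uₓ, u_y, p, pₓ, p_y) = S(u,p) + H(u,p) + a₁²(uₓ² + u_y²)/(36u) + a₂²(pₓ² + p_y²)/(36p) + a₃²((uₓ+pₓ)² + (u_y+p_y)²)/(36(1−u−p)) on the set D = {(u, uₓ, u_y, p, pₓ, p_y) ∈ ℝ⁶ : u > 0, p > 0, u + p < 1}. Then f admits a convex-concave decomposition on D: f = f_c − f_e, where f_c(u, uₓ, u_y, p, pₓ,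 p_y) = S(u,p) + a₁²(uₓ² + u_y²)/(36u) + a₂²(pₓ² + p_y²)/(36p) + a₃²((uₓ+pₓ)² + (u_y+p_y)²)/(36(1−u−p)) is convex on D and f_e(u, uₓ, u_y, p, pₓ, p_y) = −H(u,p) is convex on D. -/
open Real Set

private lemma fhdg_combo_pos {x y a b : ℝ} (hx : 0 < x) (hy : 0 < y)
    (ha : 0 ≤ a) (hb : 0 ≤ b) (hab : a + b = 1) : 0 < a * x + b * y := by
  rcases ha.eq_or_lt' with h | h
  · have hb1 : b = 1 := by linarith
    rw [h, hb1]
    simpa using hy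
  · nlinarith [mul_pos h hx, mul_nonneg hb hy.le]

private lemma fhdg_sq_div {w₁ w₂ t₁ t₂ a b : ℝ} (ht₁ : 0 < t₁) (ht₂ : 0 < t₂)
    (ha : 0 ≤ a) (hb : 0 ≤ b) (hab : a + b = 1) :
    (a * w₁ + b * w₂) ^ 2 / (a * t₁ + b * t₂) ≤ a * (w₁ ^ 2 / t₁) + b * (w₂ ^ 2 / t₂) := by
  have htd : 0 < a * t₁ + b * t₂ := fhdg_combo_pos ht₁ ht₂ ha hb hab
  rw [← sub_nonneg]
  have key : a * (w₁ ^ 2 / t₁) + b * (w₂ ^ 2 / t₂) - (a * w₁ + b * w₂) ^ 2 / (a * t₁ + b * t₂)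
      = a * b * (w₁ * t₂ - w₂ * t₁) ^ 2 / (t₁ * t₂ * (a * t₁ + b * t₂)) := by
    field_simp
    ring
  rw [key]
  positivity

private lemma fhdg_smul {E : Type*} [AddCommGroup E] [Module ℝ E] {s : Set E} {f : E → ℝ}
    {c : ℝ} (hc : 0 ≤ c) (h : ConvexOn ℝ s f) : ConvexOn ℝ s (fun x => c * f x) := by
  simpa [Pi.smul_def, smul_eq_mul] using h.smul hc

private lemma fhdg_linear {s : Set ℝ} (hs : Convex ℝ s) (c : ℝ) :
    ConvexOn ℝ s (fun t => c * t) := by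
  refine ⟨hs, fun x _ y _ a b _ _ _ => ?_⟩
  simp only [smul_eq_mul]
  exact le_of_eq (by ring)

private lemma fhdg_comp_aff {s : Set (Fin 6 → ℝ)} (hs : Convex ℝ s)
    {g : ℝ → ℝ} {t : Set ℝ} (hg : ConvexOn ℝ t g) (c d e : ℝ)
    (h : ∀ x ∈ s, c + d * x 0 + e * x 3 ∈ t) :
    ConvexOn ℝ s (fun x => g (c + d * x 0 + e * x 3)) := by
  refine ⟨hs, fun x hx y hy a b ha hb hab => ?_⟩
  have key : c + d * (a • x + b • y) 0 + e * (a • x + b • y) 3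
      = a * (c + d * x 0 + e * x 3) + b * (c + d * y 0 + e * y 3) := by
    simp only [Pi.add_apply, Pi.smul_apply, smul_eq_mul]
    linear_combination (-c) * hab
  have h2 := hg.2 (h x hx) (h y hy) ha hb hab
  simp only [smul_eq_mul] at h2 ⊢
  rw [key]
  exact h2

private lemma fhdg_persp {s : Set (Fin 6 → ℝ)} (hs : Convex ℝ s)
    (i j : Fin 6) (k₁ k₂ c d e : ℝ)
    (h : ∀ x ∈ s, 0 < c + d * x 0 + e * x 3) :
    ConvexOn ℝ s (fun x => (k₁ * x i + k₂ * x j) ^ 2 / (c + d * x 0 + e * x 3)) := by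
  refine ⟨hs, fun x hx y hy a b ha hb hab => ?_⟩
  have hd : c + d * (a • x + b • y) 0 + e * (a • x + b • y) 3
      = a * (c + d * x 0 + e * x 3) + b * (c + d * y 0 + e * y 3) := by
    simp only [Pi.add_apply, Pi.smul_apply, smul_eq_mul]
    linear_combination (-c) * hab
  have hn : k₁ * (a • x + b • y) i + k₂ * (a • x + b • y) j
      = a * (k₁ * x i + k₂ * x j) + b * (k₁ * y i + k₂ * y j) := by
    simp only [Pi.add_apply, Pi.smul_apply, smul_eq_mul]; ring
  simp only [smul_eq_mul] at *
  rw [hd, hn]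
  exact fhdg_sq_div (h x hx) (h y hy) ha hb hab

set_option maxHeartbeats 800000 in
/-- Convex-concave decomposition of the Flory–Huggins–deGennes energy density:
on `D = {(u,uₓ,u_y,p,pₓ,p_y) ∈ ℝ⁶ : u > 0, p > 0, u + p < 1}` (coordinates
`x 0 = u, x 1 = uₓ, x 2 = u_y, x 3 = p, x 4 = pₓ, x 5 = p_y`), the energy density
`f = S + H + gradient terms` splits as `f = f_c − f_e` with
`f_c = S + gradient terms` convex on `D` and `f_e = −H` convex on `D`, provided
`γ, N, α, β > 0`, `χ₁₃, χ₂₃ > 0` and `4χ₁₃χ₂₃ − (χ₁₂ − χ₁₃ − χ₂₃)² > 0`. -/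
theorem floryHugginsDeGennes_convex_concave_decomposition
    (γ N α β : ℝ) (hγ : 0 < γ) (hN : 0 < N) (hα : 0 < α) (hβ : 0 < β)
    (χ₁₂ χ₁₃ χ₂₃ : ℝ) (h13 : 0 < χ₁₃) (h23 : 0 < χ₂₃)
    (hdet : 0 < 4 * χ₁₃ * χ₂₃ - (χ₁₂ - χ₁₃ - χ₂₃) ^ 2)
    (a₁ a₂ a₃ : ℝ)
    (Dset : Set (Fin 6 → ℝ))
    (hD : Dset = {x : Fin 6 → ℝ | 0 < x 0 ∧ 0 < x 3 ∧ x 0 + x 3 < 1})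
    (S H f fc fe : (Fin 6 → ℝ) → ℝ)
    (hS : S = fun x =>
      x 0 / γ * Real.log (α * x 0 / γ) + x 3 / N * Real.log (β * x 3 / N)
        + (1 - x 0 - x 3) * Real.log (1 - x 0 - x 3))
    (hH : H = fun x =>
      χ₁₂ * x 0 * x 3 + χ₁₃ * x 0 * (1 - x 0 - x 3) + χ₂₃ * x 3 * (1 - x 0 - x 3))
    (hf : f = fun x => S x + H x
        + a₁ ^ 2 * ((x 1) ^ 2 + (x 2) ^ 2) / (36 * x 0)
        + a₂ ^ 2 * ((x 4) ^ 2 + (x 5) ^ 2) / (36 * x 3)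
        + a₃ ^ 2 * ((x 1 + x 4) ^ 2 + (x 2 + x 5) ^ 2) / (36 * (1 - x 0 - x 3)))
    (hfc : fc = fun x => S x
        + a₁ ^ 2 * ((x 1) ^ 2 + (x 2) ^ 2) / (36 * x 0)
        + a₂ ^ 2 * ((x 4) ^ 2 + (x 5) ^ 2) / (36 * x 3)
        + a₃ ^ 2 * ((x 1 + x 4) ^ 2 + (x 2 + x 5) ^ 2) / (36 * (1 - x 0 - x 3)))
    (hfe : fe = fun x => -H x) :
    ConvexOn ℝ Dset fc ∧ ConvexOn ℝ Dset fe ∧ ∀ x ∈ Dset, f x = fc x - fe x := by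
  have hDconv : Convex ℝ Dset := by
    rw [hD]
    intro x hx y hy a b ha hb hab
    obtain ⟨hx0, hx3, hx1⟩ := hx
    obtain ⟨hy0, hy3, hy1⟩ := hy
    refine ⟨?_, ?_, ?_⟩ <;> simp only [Pi.add_apply, Pi.smul_apply, smul_eq_mul]
    · exact fhdg_combo_pos hx0 hy0 ha hb hab
    · exact fhdg_combo_pos hx3 hy3 ha hb hab
    · rcases ha.eq_or_lt' with h | h
      · have hb1 : b = 1 := by linarith
        rw [h, hb1]; simpa using hy1
      · nlinarith [mul_pos h (by linarith : (0:ℝ) < 1 - (x 0 + x 3)),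
          mul_nonneg hb (by linarith : (0:ℝ) ≤ 1 - (y 0 + y 3))]
  -- 1D convex building blocks
  have hmul_log : ConvexOn ℝ (Set.Ioi (0:ℝ)) (fun t => t * Real.log t) :=
    Real.convexOn_mul_log.subset Set.Ioi_subset_Ici_self (convex_Ioi 0)
  have hg1 : ConvexOn ℝ (Set.Ioi (0:ℝ)) (fun t => t / γ * Real.log (α * t / γ)) := by
    refine ((fhdg_smul (by positivity : (0:ℝ) ≤ 1/γ) hmul_log).add
      (fhdg_linear (convex_Ioi 0) (Real.log (α/γ)/γ))).congr fun t ht => ?_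
    have ht' : (0:ℝ) < t := ht
    have hl : Real.log (α * t / γ) = Real.log (α/γ) + Real.log t := by
      rw [show α * t / γ = (α/γ) * t by ring, Real.log_mul (by positivity) (ne_of_gt ht')]
    simp only [hl, Pi.add_apply]
    field_simp
    ring
  have hg2 : ConvexOn ℝ (Set.Ioi (0:ℝ)) (fun t => t / N * Real.log (β * t / N)) := by
    refine ((fhdg_smul (by positivity : (0:ℝ) ≤ 1/N) hmul_log).add
      (fhdg_linear (convex_Ioi 0) (Real.log (β/N)/N))).congr fun t ht => ?_
    have ht' : (0:ℝ) < t := ht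
    have hl : Real.log (β * t / N) = Real.log (β/N) + Real.log t := by
      rw [show β * t / N = (β/N) * t by ring, Real.log_mul (by positivity) (ne_of_gt ht')]
    simp only [hl, Pi.add_apply]
    field_simp
    ring
  -- membership facts
  have hmem0 : ∀ x ∈ Dset, (0:ℝ) + 1 * x 0 + 0 * x 3 ∈ Set.Ioi (0:ℝ) := by
    intro x hx; rw [hD] at hx; simpa using hx.1
  have hmem3 : ∀ x ∈ Dset, (0:ℝ) + 0 * x 0 + 1 * x 3 ∈ Set.Ioi (0:ℝ) := by
    intro x hx; rw [hD] at hx; simpa using hx.2.1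
  have hmemc : ∀ x ∈ Dset, (1:ℝ) + (-1) * x 0 + (-1) * x 3 ∈ Set.Ici (0:ℝ) := by
    intro x hx; rw [hD] at hx
    have := hx.2.2
    simp only [Set.mem_Ici]
    linarith
  have hpos0 : ∀ x ∈ Dset, (0:ℝ) < 0 + 36 * x 0 + 0 * x 3 := by
    intro x hx; rw [hD] at hx; have := hx.1; linarith
  have hpos3 : ∀ x ∈ Dset, (0:ℝ) < 0 + 0 * x 0 + 36 * x 3 := by
    intro x hx; rw [hD] at hx; have := hx.2.1; linarith
  have hposc : ∀ x ∈ Dset, (0:ℝ) < 36 + (-36) * x 0 + (-36) * x 3 := by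
    intro x hx; rw [hD] at hx; have := hx.2.2; linarith
  -- entropy pieces
  have P1 : ConvexOn ℝ Dset (fun x : Fin 6 → ℝ => x 0 / γ * Real.log (α * x 0 / γ)) := by
    refine (fhdg_comp_aff hDconv hg1 0 1 0 hmem0).congr fun x _ => ?_
    norm_num
  have P2 : ConvexOn ℝ Dset (fun x : Fin 6 → ℝ => x 3 / N * Real.log (β * x 3 / N)) := by
    refine (fhdg_comp_aff hDconv hg2 0 0 1 hmem3).congr fun x _ => ?_
    norm_num
  have P3 : ConvexOn ℝ Dset
      (fun x : Fin 6 → ℝ => (1 - x 0 - x 3) * Real.log (1 - x 0 - x 3)) := by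
    refine (fhdg_comp_aff hDconv Real.convexOn_mul_log 1 (-1) (-1) hmemc).congr fun x _ => ?_
    norm_num [show ∀ u v : ℝ, 1 + -u + -v = 1 - u - v from fun u v => by ring]
  have PS : ConvexOn ℝ Dset (fun x : Fin 6 → ℝ => S x) := by
    rw [hS]; exact (P1.add P2).add P3
  -- gradient pieces
  have Q1 := fhdg_persp hDconv 1 1 1 0 0 36 0 hpos0
  have Q2 := fhdg_persp hDconv 2 2 1 0 0 36 0 hpos0
  have Q3 := fhdg_persp hDconv 4 4 1 0 0 0 36 hpos3
  have Q4 := fhdg_persp hDconv 5 5 1 0 0 0 36 hpos3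
  have Q5 := fhdg_persp hDconv 1 4 1 1 36 (-36) (-36) hposc
  have Q6 := fhdg_persp hDconv 2 5 1 1 36 (-36) (-36) hposc
  have ha1 : (0:ℝ) ≤ a₁ ^ 2 := sq_nonneg _
  have ha2 : (0:ℝ) ≤ a₂ ^ 2 := sq_nonneg _
  have ha3 : (0:ℝ) ≤ a₃ ^ 2 := sq_nonneg _
  have G1 : ConvexOn ℝ Dset
      (fun x : Fin 6 → ℝ => a₁ ^ 2 * ((x 1) ^ 2 + (x 2) ^ 2) / (36 * x 0)) := by
    refine ((fhdg_smul ha1 Q1).add (fhdg_smul ha1 Q2)).congr fun x hx => ?_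
    rw [hD] at hx
    have h0 : x 0 ≠ 0 := ne_of_gt hx.1
    simp only [Pi.add_apply]
    field_simp
    ring
  have G2 : ConvexOn ℝ Dset
      (fun x : Fin 6 → ℝ => a₂ ^ 2 * ((x 4) ^ 2 + (x 5) ^ 2) / (36 * x 3)) := by
    refine ((fhdg_smul ha2 Q3).add (fhdg_smul ha2 Q4)).congr fun x hx => ?_
    rw [hD] at hx
    have h0 : x 3 ≠ 0 := ne_of_gt hx.2.1
    simp only [Pi.add_apply]
    field_simp
    ring
  have G3 : ConvexOn ℝ Dset
      (fun x : Fin 6 → ℝ =>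
        a₃ ^ 2 * ((x 1 + x 4) ^ 2 + (x 2 + x 5) ^ 2) / (36 * (1 - x 0 - x 3))) := by
    refine ((fhdg_smul ha3 Q5).add (fhdg_smul ha3 Q6)).congr fun x hx => ?_
    rw [hD] at hx
    have h0 : (1 : ℝ) - x 0 - x 3 ≠ 0 := by have := hx.2.2; intro h; linarith [hx.1, hx.2.1]
    simp only [Pi.add_apply]
    rw [show (36:ℝ) + -36 * x 0 + -36 * x 3 = 36 * (1 - x 0 - x 3) from by ring]
    field_simp
  have hFc : ConvexOn ℝ Dset fc := by
    rw [hfc]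
    exact ((PS.add G1).add G2).add G3
  have hFe : ConvexOn ℝ Dset fe := by
    rw [hfe, hH]
    refine ⟨hDconv, fun x hx y hy a b ha hb hab => ?_⟩
    obtain rfl : b = 1 - a := by linarith
    simp only [Pi.add_apply, Pi.smul_apply, smul_eq_mul]
    have hQ : 0 ≤ χ₁₃ * (x 0 - y 0) ^ 2 + χ₂₃ * (x 3 - y 3) ^ 2
        + (χ₁₃ + χ₂₃ - χ₁₂) * (x 0 - y 0) * (x 3 - y 3) := by
      nlinarith [sq_nonneg (2 * χ₁₃ * (x 0 - y 0) + (χ₁₃ + χ₂₃ - χ₁₂) * (x 3 - y 3)),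
        mul_nonneg hdet.le (sq_nonneg (x 3 - y 3)), h13]
    rw [← sub_nonneg]
    have key : a * -(χ₁₂ * x 0 * x 3 + χ₁₃ * x 0 * (1 - x 0 - x 3) + χ₂₃ * x 3 * (1 - x 0 - x 3))
          + (1 - a) * -(χ₁₂ * y 0 * y 3 + χ₁₃ * y 0 * (1 - y 0 - y 3) + χ₂₃ * y 3 * (1 - y 0 - y 3))
          - -(χ₁₂ * (a * x 0 + (1 - a) * y 0) * (a * x 3 + (1 - a) * y 3)
              + χ₁₃ * (a * x 0 + (1 - a) * y 0)
                * (1 - (a * x 0 + (1 - a) * y 0) - (a * x 3 + (1 - a) * y 3))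
              + χ₂₃ * (a * x 3 + (1 - a) * y 3)
                * (1 - (a * x 0 + (1 - a) * y 0) - (a * x 3 + (1 - a) * y 3)))
        = a * (1 - a) * (χ₁₃ * (x 0 - y 0) ^ 2 + χ₂₃ * (x 3 - y 3) ^ 2
            + (χ₁₃ + χ₂₃ - χ₁₂) * (x 0 - y 0) * (x 3 - y 3)) := by ring
    rw [key]
    exact mul_nonneg (mul_nonneg ha hb) hQ
  refine ⟨hFc, hFe, fun x _ => ?_⟩
  rw [hf, hfc, hfe]
  ring
end
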